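/- Let d ≥ 1, let F : ℝ^d → ℝ be differentiable with gradient ∇F that is L-Lipschitz (L ≥ 0) with respect to the Euclidean norm, let w ∈ ℝ^d, η > 0, and let s ∈ {−1,1}^d. Set w' = w − η·s. Then F(w') ≤ F(w) − η·‖∇F(w)‖₁ + (L·η²·d)/2 + 2η·∑_{i=1}^{d} |∂_i F(w)| · 1{ s_i ≠ sign(∂_i F(w)) }, where ‖g‖₁ = ∑_i |g_i| denotes the ℓ₁-norm, ∂_i F(w) is the i-th coordinate of ∇F(w), and 1{·} is the indicator function. -/

import Mathlib

lemma descent_aux (d : ℕ) (F : EuclideanSpace ℝ (Fin d) → ℝ)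
    (g : EuclideanSpace ℝ (Fin d) → EuclideanSpace ℝ (Fin d))
    (hgrad : ∀ w, HasGradientAt F (g w) w) (L : ℝ)
    (hlip : ∀ w₁ w₂, ‖g w₁ - g w₂‖ ≤ L * ‖w₁ - w₂‖)
    (w v : EuclideanSpace ℝ (Fin d)) :
    F (w + v) ≤ F w + (∑ x, g w x * v x) + L / 2 * ‖v‖ ^ 2 := by
  set φ : ℝ → ℝ := fun t => F (w + t • v) - t * inner ℝ (g w) v - L * t ^ 2 / 2 * ‖v‖ ^ 2 with hφ
  have hline : ∀ t : ℝ, HasDerivAt (fun t : ℝ => w + t • v) v t := by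
    intro t
    simpa using ((hasDerivAt_id t).smul_const v).const_add w
  have hder : ∀ t : ℝ, HasDerivAt φ
      ((inner ℝ (g (w + t • v)) v : ℝ) - inner ℝ (g w) v - L * t * ‖v‖ ^ 2) t := by
    intro t
    have h1 : HasDerivAt (fun t : ℝ => F (w + t • v)) (inner ℝ (g (w + t • v)) v) t := by
      have := (hasGradientAt_iff_hasFDerivAt.mp (hgrad (w + t • v))).comp_hasDerivAt t (hline t)
      exact this
    have h2 : HasDerivAt (fun t : ℝ => t * (inner ℝ (g w) v : ℝ)) (inner ℝ (g w) v) t := by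
      simpa using (hasDerivAt_id t).mul_const (inner ℝ (g w) v : ℝ)
    have h3 : HasDerivAt (fun t : ℝ => L * t ^ 2 / 2 * ‖v‖ ^ 2) (L * t * ‖v‖ ^ 2) t := by
      have : HasDerivAt (fun t : ℝ => t ^ 2) (2 * t) t := by
        simpa using hasDerivAt_pow 2 t
      have := ((this.const_mul L).div_const 2).mul_const (‖v‖ ^ 2)
      exact this.congr_deriv (by ring)
    exact (h1.sub h2).sub h3
  have hmono : AntitoneOn φ (Set.Icc 0 1) := by
    apply antitoneOn_of_deriv_nonpos (convex_Icc 0 1)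
    · have hdiff : Differentiable ℝ φ := fun t => (hder t).differentiableAt
      exact hdiff.continuous.continuousOn
    · intro t ht
      exact ((hder t).differentiableAt).differentiableWithinAt
    · intro t ht
      rw [(hder t).deriv]
      rw [interior_Icc] at ht
      have hcs : (inner ℝ (g (w + t • v)) v : ℝ) - inner ℝ (g w) v ≤ ‖g (w + t • v) - g w‖ * ‖v‖ := by
        rw [← inner_sub_left]
        exact real_inner_le_norm _ _
      have hl : ‖g (w + t • v) - g w‖ ≤ L * (t * ‖v‖) := by
        have := hlip (w + t • v) w
        simpa [norm_smul, abs_of_pos ht.1, mul_assoc] using this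
      nlinarith [norm_nonneg v, mul_le_mul_of_nonneg_right hl (norm_nonneg v), ht.1.le]
  have := hmono (Set.left_mem_Icc.mpr zero_le_one) (Set.right_mem_Icc.mpr zero_le_one) zero_le_one
  simp only [hφ] at this
  simp at this
  have hi : (inner ℝ (g w) v : ℝ) = ∑ x, g w x * v x := by
    simp [PiLp.inner_apply, RCLike.inner_apply, mul_comm]
  linarith [hi ▸ this]

/-- Per-iteration descent bound for a sign-based update: if `F` has an
`L`-Lipschitz gradient `g`, `s ∈ {-1,1}^d` and `w' = w - η s`, then
`F(w') ≤ F(w) - η‖g(w)‖₁ + Lη²d/2 + 2η ∑_i |g(w)_i| · 1{s_i ≠ sign(g(w)_i)}`. -/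
theorem stmt_9 (d : ℕ) (hd : 1 ≤ d) (L : ℝ) (hL : 0 ≤ L)
    (F : EuclideanSpace ℝ (Fin d) → ℝ)
    (g : EuclideanSpace ℝ (Fin d) → EuclideanSpace ℝ (Fin d))
    (hgrad : ∀ w, HasGradientAt F (g w) w)
    (hlip : ∀ w₁ w₂, ‖g w₁ - g w₂‖ ≤ L * ‖w₁ - w₂‖)
    (w : EuclideanSpace ℝ (Fin d)) (η : ℝ) (hη : 0 < η)
    (s : EuclideanSpace ℝ (Fin d)) (hs : ∀ i, s i = 1 ∨ s i = -1)
    (w' : EuclideanSpace ℝ (Fin d)) (hw' : w' = w - η • s) :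
    F w' ≤ F w - η * (∑ i, |g w i|) + L * η ^ 2 * d / 2 +
      2 * η * ∑ i, |g w i| * (if s i ≠ Real.sign (g w i) then 1 else 0) := by
  have hv : w' = w + (-(η • s)) := by rw [hw']; abel
  have hdesc := descent_aux d F g hgrad L hlip w (-(η • s))
  rw [← hv] at hdesc
  -- norm of v
  have hnv : ‖(-(η • s) : EuclideanSpace ℝ (Fin d))‖ ^ 2 = η ^ 2 * d := by
    rw [norm_neg, norm_smul]
    have hns : ‖s‖ ^ 2 = (d : ℝ) := by
      rw [EuclideanSpace.norm_eq, Real.sq_sqrt (by positivity)]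
      have h1 : ∀ i, s i ^ 2 = 1 := by
        intro i; rcases hs i with h | h <;> simp [h]
      simp [h1]
    rw [mul_pow, hns]
    simp [abs_of_pos hη, sq_abs]
  -- inner product term
  have hsum : (∑ x, g w x * (-(η • s)) x) ≤
      η * (∑ i, (-|g w i| + 2 * (|g w i| * (if s i ≠ Real.sign (g w i) then 1 else 0)))) := by
    rw [Finset.mul_sum]
    apply Finset.sum_le_sum
    intro i _
    have hvi : (-(η • s) : EuclideanSpace ℝ (Fin d)) i = -(η * s i) := by
      simp [PiLp.smul_apply]
    rw [hvi]
    by_cases h : s i = Real.sign (g w i)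
    · simp only [h, ne_eq, not_true_eq_false, if_neg, if_false]
      have hgne : g w i ≠ 0 := by
        intro h0
        rcases hs i with h1 | h1 <;> rw [h1, h0, Real.sign_zero] at h <;> norm_num at h
      have : Real.sign (g w i) * g w i = |g w i| := by
        rcases lt_trichotomy (g w i) 0 with hlt | heq | hgt
        · rw [Real.sign_of_neg hlt, abs_of_neg hlt]; ring
        · exact absurd heq hgne
        · rw [Real.sign_of_pos hgt, abs_of_pos hgt]; ring
      nlinarith [abs_nonneg (g w i)]
    · simp only [ne_eq, h, not_false_eq_true, if_true, if_pos]
      have habs : |g w i * s i| ≤ |g w i| := by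
        rw [abs_mul]
        rcases hs i with h1 | h1 <;> simp [h1]
      have := neg_abs_le (g w i * s i)
      nlinarith [abs_nonneg (g w i)]
  rw [hnv] at hdesc
  have hfin : η * (∑ i, (-|g w i| + 2 * (|g w i| * (if s i ≠ Real.sign (g w i) then 1 else 0))))
      = -(η * ∑ i, |g w i|) +
        2 * η * ∑ i, |g w i| * (if s i ≠ Real.sign (g w i) then 1 else 0) := by
    rw [Finset.sum_add_distrib, Finset.sum_neg_distrib, ← Finset.mul_sum]
    ring
  nlinarith [hdesc, hsum]
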